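/- Let D be a triangulated category and consider a morphism between two distinguished triangles (u,v,w): B[-1] → C → A → B and (u',v',w'): B'[-1] → C' → A' → B', given by maps α: A → A' and β: B → B' with w'∘α = β∘w. If Hom(B, A') = 0 and Hom(A, B'[-1]) = 0, then there exists a unique morphism γ: C → C' such that (β[-1], γ, α) is a morphism of distinguished triangles. -/

import Mathlib

open CategoryTheory CategoryTheory.Limits CategoryTheory.Pretriangulated

/-- Let `D` be a triangulated category and consider two distinguished
triangles `B[-1] → C → A → B` and `B'[-1] → C' → A' → B'` (encoded as distinguished
triangles `C → A → B → C⟦1⟧` and `C' → A' → B' → C'⟦1⟧`), together with morphisms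
`α : A ⟶ A'` and `β : B ⟶ B'` commuting with the maps `w, w'`.  If `Hom(B, A') = 0`
and `Hom(A, B'[-1]) = 0`, then there exists a unique morphism `γ : C ⟶ C'` extending
`(α, β)` to a morphism of distinguished triangles. -/
theorem stmt0 {D : Type*} [Category D] [Preadditive D] [HasZeroObject D]
    [HasShift D ℤ] [∀ n : ℤ, (shiftFunctor D n).Additive] [Pretriangulated D]
    (T T' : Triangle D) (hT : T ∈ distTriang D) (hT' : T' ∈ distTriang D)
    (α : T.obj₂ ⟶ T'.obj₂) (β : T.obj₃ ⟶ T'.obj₃)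
    (hcomm : T.mor₂ ≫ β = α ≫ T'.mor₂)
    (h1 : ∀ f : T.obj₃ ⟶ T'.obj₂, f = 0)
    (h2 : ∀ f : T.obj₂ ⟶ (T'.obj₃)⟦(-1 : ℤ)⟧, f = 0) :
    ∃! γ : T.obj₁ ⟶ T'.obj₁,
      T.mor₁ ≫ α = γ ≫ T'.mor₁ ∧ T.mor₃ ≫ γ⟦(1 : ℤ)⟧' = β ≫ T'.mor₃ := by
  obtain ⟨γ, hγ₁, hγ₂⟩ :=
    complete_distinguished_triangle_morphism₁ T T' hT hT' α β hcomm
  refine ⟨γ, ⟨hγ₁, hγ₂⟩, ?_⟩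
  -- uniqueness
  rintro γ' ⟨hγ'₁, hγ'₂⟩
  have key : ∀ d : T.obj₁ ⟶ T'.obj₁, d ≫ T'.mor₁ = 0 →
      T.mor₃ ≫ d⟦(1 : ℤ)⟧' = 0 → d = 0 := by
    intro d hd₁ hd₂
    -- d factors through T.mor₁
    have hinv : (T.invRotate).mor₁ ≫ d = 0 := by
      dsimp [Triangle.invRotate]
      erw [Preadditive.neg_comp, Category.assoc, neg_eq_zero]
      erw [← NatTrans.naturality]
      dsimp
      erw [← Functor.map_comp_assoc, hd₂]
      erw [Functor.map_zero]
      exact zero_comp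
    obtain ⟨g, hg⟩ := Triangle.yoneda_exact₂ _ (inv_rot_of_distTriang T hT) d hinv
    -- g ≫ T'.mor₁ factors through T.mor₂, hence is 0 by h1
    have hg0 : g ≫ T'.mor₁ = 0 := by
      have h : T.mor₁ ≫ g ≫ T'.mor₁ = 0 := by
        have : (T.invRotate).mor₂ = T.mor₁ := rfl
        exact (Category.assoc _ _ _).symm.trans ((congrArg (· ≫ T'.mor₁) hg.symm).trans hd₁)
      obtain ⟨h', hh'⟩ := Triangle.yoneda_exact₂ _ hT (g ≫ T'.mor₁) h
      exact hh'.trans (by rw [h1 h']; exact comp_zero)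
    -- g factors through T'.obj₃⟦-1⟧, hence is 0 by h2
    have : (T'.invRotate).mor₂ = T'.mor₁ := rfl
    rw [← this] at hg0
    obtain ⟨k, hk⟩ := Triangle.coyoneda_exact₂ _ (inv_rot_of_distTriang T' hT') g hg0
    have hk0 : k = 0 := h2 k
    rw [hk0, zero_comp] at hk
    rw [hg, hk]
    exact comp_zero
  have := key (γ' - γ) (by rw [Preadditive.sub_comp, ← hγ₁, ← hγ'₁, sub_self])
    (by rw [Functor.map_sub, Preadditive.comp_sub, hγ₂, hγ'₂, sub_self])
  rw [← sub_eq_zero]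
  exact this
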